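/- There exists ε₀ > 0 such that for all 0 < ε ≤ ε₀: if λ₁ ≠ λ₂ are real numbers and u₁, u₂ ∈ C²([0,1]) satisfy φ₂u_i'' + φ₁u_i' = λ_i u_i on [0,1] for i = 1,2, then ∫_{x₀}^{1−x₀} w(x)·u₁(x)·u₂(x) dx = 0; that is, eigenfunctions of D_ε corresponding to distinct eigenvalues are orthogonal in the weighted space L²((x₀,1−x₀), w(x)dx). -/

import Mathlib

open Real Set Filter Topology MeasureTheory

/-- The degenerate point `x₀ = (2 − √3)ε`. -/
noncomputable def x0 (ε : ℝ) : ℝ := (2 - Real.sqrt 3) * ε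

/-- Leading coefficient `φ₂` of `D_ε` on the interval. -/
noncomputable def phi2 (ε x : ℝ) : ℝ :=
  if x ≤ ε then (1/12) * (1 - 4*(x/ε) + (x/ε)^2)
  else if x ≤ 1 - ε then -(1/6)
  else (1/12) * (1 - 4*((1-x)/ε) + ((1-x)/ε)^2)

/-- First-order coefficient `φ₁` of `D_ε` on the interval. -/
noncomputable def phi1 (ε x : ℝ) : ℝ :=
  if x ≤ ε then -6 * (1 - x/ε) * ((1 + x/ε)^3)⁻¹
  else if x ≤ 1 - ε then 0
  else 6 * (1 - (1-x)/ε) * ((1 + (1-x)/ε)^3)⁻¹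

/-- Integration-factor function `g` on `[0, ε]`. -/
noncomputable def gfun (ε x : ℝ) : ℝ :=
  Real.sign (x - x0 ε) * |x - x0 ε| ^ ((4 + 2*Real.sqrt 3) * ε) *
    |x - 4*ε + x0 ε| ^ ((4 - 2*Real.sqrt 3) * ε) *
    (x + ε) ^ (-(8*ε)) *
    Real.exp (12*ε^3/(ε+x)^2 + 12*ε^2/(ε+x))

/-- Sturm–Liouville principal coefficient `p`. -/
noncomputable def pfun (ε x : ℝ) : ℝ :=
  if x ≤ ε then gfun ε x / (6 * gfun ε ε)
  else if x ≤ 1 - ε then 1/6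
  else gfun ε (1-x) / (6 * gfun ε ε)

/-- Sturm–Liouville weight `w = -p/φ₂`. -/
noncomputable def wfun (ε x : ℝ) : ℝ := -pfun ε x / phi2 ε x

/- ### Auxiliary definitions -/

/-- Smooth version of `gfun` on `[x₀, ε]`. -/
noncomputable def g0 (ε x : ℝ) : ℝ :=
  (x - x0 ε) ^ ((4 + 2*Real.sqrt 3) * ε) *
    ((2 + Real.sqrt 3)*ε - x) ^ ((4 - 2*Real.sqrt 3) * ε) *
    (x + ε) ^ (-(8*ε)) *
    Real.exp (12*ε^3/(ε+x)^2 + 12*ε^2/(ε+x))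

/-- Logarithmic derivative of `g0`. -/
noncomputable def Lfun (ε x : ℝ) : ℝ :=
  (4 + 2*Real.sqrt 3)*ε/(x - x0 ε) - (4 - 2*Real.sqrt 3)*ε/((2 + Real.sqrt 3)*ε - x)
    - 8*ε/(x+ε) - 24*ε^3/(ε+x)^3 - 12*ε^2/(ε+x)^2

lemma s_sq : Real.sqrt 3 ^ 2 = 3 := Real.sq_sqrt (by norm_num)
lemma s_gt : 1 < Real.sqrt 3 := by nlinarith [s_sq, Real.sqrt_nonneg 3]
lemma s_lt : Real.sqrt 3 < 2 := by nlinarith [s_sq, Real.sqrt_nonneg 3]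

section eps
variable {ε : ℝ} (hε : 0 < ε)
include hε

lemma x0_pos : 0 < x0 ε := by
  have := s_lt; unfold x0; nlinarith
lemma x0_lt : x0 ε < ε := by
  have := s_gt; unfold x0; nlinarith

lemma Apos : 0 < (4 + 2*Real.sqrt 3) * ε := by nlinarith [s_gt]
lemma Bpos : 0 < (4 - 2*Real.sqrt 3) * ε := by nlinarith [s_lt]

lemma gfun_eq {x : ℝ} (hx : x ∈ Icc (x0 ε) ε) : gfun ε x = g0 ε x := by
  have h2 : 0 < (2 + Real.sqrt 3)*ε - x := by nlinarith [s_gt, hx.2]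
  have h4 : x - 4*ε + x0 ε = -((2 + Real.sqrt 3)*ε - x) := by unfold x0; ring
  rcases eq_or_lt_of_le hx.1 with h | h
  · rw [gfun, g0, ← h]
    simp [Real.sign_zero, Real.zero_rpow (Apos hε).ne']
  · rw [gfun, g0, Real.sign_of_pos (by linarith), abs_of_pos (by linarith), h4, abs_neg,
      abs_of_pos h2, one_mul]

lemma g0_pos {x : ℝ} (hx : x ∈ Ioc (x0 ε) ε) : 0 < g0 ε x := by
  have h1 : 0 < x - x0 ε := by linarith [hx.1]
  have h2 : 0 < (2 + Real.sqrt 3)*ε - x := by nlinarith [s_gt, hx.2]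
  have h3 : 0 < x + ε := by linarith [x0_pos hε, hx.1]
  exact mul_pos (mul_pos (mul_pos (Real.rpow_pos_of_pos h1 _) (Real.rpow_pos_of_pos h2 _))
    (Real.rpow_pos_of_pos h3 _)) (Real.exp_pos _)

lemma geps_pos : 0 < gfun ε ε := by
  rw [gfun_eq hε ⟨(x0_lt hε).le, le_refl _⟩]
  exact g0_pos hε ⟨x0_lt hε, le_refl _⟩

end eps
lemma keyN (ε x s : ℝ) (hs : s^2 = 3) :
    (4+2*s)*ε*((2+s)*ε-x)*(x+ε)^3 - (4-2*s)*ε*(x-(2-s)*ε)*(x+ε)^3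
      - 8*ε*(x-(2-s)*ε)*((2+s)*ε-x)*(x+ε)^2
      - 24*ε^3*(x-(2-s)*ε)*((2+s)*ε-x)
      - 12*ε^2*(x-(2-s)*ε)*((2+s)*ε-x)*(x+ε) = 72*ε^4*(ε-x) := by
  linear_combination (4*ε^2*x^3+4*ε^3*x^2-16*ε^4*x-40*ε^5)*hs

lemma Lphi (ε x s : ℝ) (hs : s^2 = 3) (hε : 0 < ε)
    (h1 : 0 < x - (2-s)*ε) (h2 : 0 < (2+s)*ε - x) (h3 : 0 < x + ε) :
    ((4+2*s)*ε/(x - (2-s)*ε) - (4-2*s)*ε/((2+s)*ε - x) - 8*ε/(x+ε)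
      - 24*ε^3/(ε+x)^3 - 12*ε^2/(ε+x)^2) * ((1/12) * (1 - 4*(x/ε) + (x/ε)^2))
      = -6 * (1 - x/ε) * ((1 + x/ε)^3)⁻¹ := by
  have hε' : ε ≠ 0 := hε.ne'
  have h1' : x - (2-s)*ε ≠ 0 := h1.ne'
  have h2' : (2+s)*ε - x ≠ 0 := h2.ne'
  have h3' : x + ε ≠ 0 := h3.ne'
  have h14 : (1:ℝ) + x/ε = (x+ε)/ε := by field_simp; ring
  have hinv : (((1:ℝ) + x/ε)^3)⁻¹ = ε^3/(x+ε)^3 := by rw [h14, div_pow, inv_div]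
  have hfac : 1 - 4*(x/ε) + (x/ε)^2 = (x-(2-s)*ε)*(x-(2+s)*ε)/ε^2 := by
    field_simp
    linear_combination ε^2*hs
  rw [hinv, hfac]
  have hεx : ε + x ≠ 0 := by intro h; apply h3'; linarith
  have h1'' : x - ε*(2-s) ≠ 0 := by intro h; apply h1'; linarith
  have h2'' : ε*(2+s) - x ≠ 0 := by intro h; apply h2'; linarith
  field_simp
  have h3s : s^3 = 3*s := by rw [pow_succ, hs]
  have h4s : s^4 = 9 := by rw [show s^4 = (s^2)^2 by ring, hs]; norm_num
  have h5s : s^5 = 9*s := by rw [pow_succ, h4s]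
  have h6s : s^6 = 27 := by rw [show s^6 = (s^2)^3 by ring, hs]; norm_num
  ring_nf
  simp only [hs, h3s, h4s, h5s, h6s]
  ring

section eps2
variable {ε : ℝ} (hε : 0 < ε)
include hε

lemma phi2_fac {x : ℝ} (hx : x ≤ ε) :
    phi2 ε x = (x - (2 - Real.sqrt 3)*ε) * (x - (2 + Real.sqrt 3)*ε) / (12*ε^2) := by
  rw [phi2, if_pos hx]
  have hε' : ε ≠ 0 := hε.ne'
  field_simp
  linear_combination (ε^2)*s_sq

lemma phi2_neg {x : ℝ} (hx : x ∈ Ioc (x0 ε) ε) : phi2 ε x < 0 := by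
  rw [phi2_fac hε hx.2]
  have h1 : 0 < x - x0 ε := by linarith [hx.1]
  have h2 : 0 < (2 + Real.sqrt 3)*ε - x := by nlinarith [s_gt, hx.2]
  unfold x0 at h1
  apply div_neg_of_neg_of_pos
  · nlinarith
  · positivity

lemma L_phi {x : ℝ} (hx : x ∈ Ioc (x0 ε) ε) : Lfun ε x * phi2 ε x = phi1 ε x := by
  rw [phi2, if_pos hx.2, phi1, if_pos hx.2, Lfun]
  have h1 : 0 < x - (2 - Real.sqrt 3)*ε := by have := hx.1; unfold x0 at this; linarith
  have h2 : 0 < (2 + Real.sqrt 3)*ε - x := by nlinarith [s_gt, hx.2]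
  have h3 : 0 < x + ε := by nlinarith [x0_pos hε, hx.1]
  exact Lphi ε x _ s_sq hε h1 h2 h3

lemma g0_hasDerivAt {x : ℝ} (hx : x ∈ Ioc (x0 ε) ε) :
    HasDerivAt (g0 ε) (g0 ε x * Lfun ε x) x := by
  have h1 : 0 < x - x0 ε := by linarith [hx.1]
  have h2 : 0 < (2 + Real.sqrt 3)*ε - x := by nlinarith [s_gt, hx.2]
  have h3 : 0 < x + ε := by nlinarith [x0_pos hε, hx.1]
  have h3' : 0 < ε + x := by linarith
  have hA : HasDerivAt (fun y => (y - x0 ε) ^ ((4 + 2*Real.sqrt 3) * ε))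
      (1 * ((4 + 2*Real.sqrt 3) * ε) * (x - x0 ε) ^ ((4 + 2*Real.sqrt 3) * ε - 1)) x :=
    ((hasDerivAt_id x).sub_const (x0 ε)).rpow_const (Or.inl h1.ne')
  have hB : HasDerivAt (fun y => ((2 + Real.sqrt 3)*ε - y) ^ ((4 - 2*Real.sqrt 3) * ε))
      ((-1) * ((4 - 2*Real.sqrt 3) * ε) * ((2 + Real.sqrt 3)*ε - x) ^ ((4 - 2*Real.sqrt 3) * ε - 1)) x :=
    (((hasDerivAt_id x).const_sub ((2 + Real.sqrt 3)*ε))).rpow_const (Or.inl h2.ne')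
  have hC : HasDerivAt (fun y => (y + ε) ^ (-(8*ε)))
      (1 * (-(8*ε)) * (x + ε) ^ (-(8*ε) - 1)) x :=
    ((hasDerivAt_id x).add_const ε).rpow_const (Or.inl h3.ne')
  have hd1 : HasDerivAt (fun y => (ε + y)^2) (2*(ε+x)) x := by
    have : HasDerivAt (fun y => (ε + y)^2) _ x := ((hasDerivAt_id' x).const_add ε).pow 2
    simpa using this
  have hd2 : HasDerivAt (fun y => ε + y) 1 x := by
    simpa using (hasDerivAt_id' x).const_add ε
  have hE0 : HasDerivAt (fun y => 12*ε^3/(ε+y)^2 + 12*ε^2/(ε+y))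
      ((0 * (ε+x)^2 - 12*ε^3 * (2*(ε+x)))/((ε+x)^2)^2 + (0 * (ε+x) - 12*ε^2 * 1)/(ε+x)^2) x :=
    ((hasDerivAt_const x (12*ε^3)).div hd1 (by positivity)).add
      ((hasDerivAt_const x (12*ε^2)).div hd2 h3'.ne')
  have hE : HasDerivAt (fun y => Real.exp (12*ε^3/(ε+y)^2 + 12*ε^2/(ε+y)))
      (Real.exp (12*ε^3/(ε+x)^2 + 12*ε^2/(ε+x)) *
        ((0 * (ε+x)^2 - 12*ε^3 * (2*(ε+x)))/((ε+x)^2)^2 + (0 * (ε+x) - 12*ε^2 * 1)/(ε+x)^2)) x :=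
    hE0.exp
  have htot : HasDerivAt (g0 ε) _ x := ((hA.mul hB).mul hC).mul hE
  convert htot using 1
  rw [g0, Lfun, Real.rpow_sub_one h1.ne', Real.rpow_sub_one h2.ne', Real.rpow_sub_one h3.ne']
  have hεx : ε + x = x + ε := by ring
  rw [hεx]
  have h1n := h1.ne'
  have h2n := h2.ne'
  have h3n := h3.ne'
  have h2m : ε*(2+Real.sqrt 3) - x ≠ 0 := by intro h; apply h2n; linarith
  simp only [Pi.mul_apply]
  field_simp
  ring

end eps2

section eps3
variable {ε : ℝ} (hε : 0 < ε) (hε2 : ε ≤ 1/100)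

lemma pfun_left {x : ℝ} (hx : x ≤ ε) : pfun ε x = gfun ε x / (6 * gfun ε ε) := if_pos hx

include hε in
lemma pfun_x0 : pfun ε (x0 ε) = 0 := by
  rw [pfun_left (x0_lt hε).le, gfun]
  simp [Real.sign_zero]

include hε in
lemma pfun_eps : pfun ε ε = 1/6 := by
  have hne := (geps_pos hε).ne'
  rw [pfun_left le_rfl]
  field_simp

include hε hε2 in
lemma pfun_mid {x : ℝ} (hx1 : ε < x) (hx2 : x ≤ 1 - ε) : pfun ε x = 1/6 := by
  rw [pfun, if_neg (not_le.2 hx1), if_pos hx2]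

include hε hε2 in
lemma pfun_right {x : ℝ} (hx1 : 1 - ε < x) : pfun ε x = gfun ε (1-x) / (6 * gfun ε ε) := by
  rw [pfun, if_neg (by linarith), if_neg (not_le.2 hx1)]

include hε hε2 in
lemma pfun_1mx0 : pfun ε (1 - x0 ε) = 0 := by
  rw [pfun_right hε hε2 (by linarith [x0_lt hε])]
  have : 1 - (1 - x0 ε) = x0 ε := by ring
  rw [this, gfun]
  simp [Real.sign_zero]

include hε hε2 in
lemma phi2_mid {x : ℝ} (hx1 : ε < x) (hx2 : x ≤ 1 - ε) : phi2 ε x = -(1/6) := by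
  rw [phi2, if_neg (not_le.2 hx1), if_pos hx2]

include hε hε2 in
lemma phi2_right {x : ℝ} (hx1 : 1 - ε < x) : phi2 ε x = phi2 ε (1-x) := by
  rw [phi2, if_neg (by linarith), if_neg (not_le.2 hx1), phi2, if_pos (by linarith)]

include hε hε2 in
lemma phi1_right {x : ℝ} (hx1 : 1 - ε < x) : phi1 ε x = -phi1 ε (1-x) := by
  rw [phi1, if_neg (by linarith), if_neg (not_le.2 hx1), phi1, if_pos (by linarith)]
  ring

include hε hε2 in
lemma phi2_ne {x : ℝ} (hx : x ∈ Ioo (x0 ε) (1 - x0 ε)) : phi2 ε x ≠ 0 := by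
  rcases le_or_gt x ε with h | h
  · exact (phi2_neg hε ⟨hx.1, h⟩).ne
  rcases le_or_gt x (1-ε) with h2 | h2
  · rw [phi2_mid hε hε2 h h2]; norm_num
  · rw [phi2_right hε hε2 h2]
    exact (phi2_neg hε ⟨by simp only [x0] at hx ⊢; linarith [hx.2], by linarith⟩).ne

include hε hε2 in
lemma phi1_mid {x : ℝ} (hx1 : ε < x) (hx2 : x ≤ 1 - ε) : phi1 ε x = 0 := by
  rw [phi1, if_neg (not_le.2 hx1), if_pos hx2]

include hε hε2 in
lemma phi1_eps : phi1 ε ε = 0 := by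
  rw [phi1, if_pos le_rfl]
  field_simp
  norm_num

include hε hε2 in
lemma Lfun_eps : Lfun ε ε = 0 := by
  have h := L_phi hε ⟨x0_lt hε, le_rfl⟩
  rw [phi1_eps hε hε2] at h
  have h2 : phi2 ε ε ≠ 0 := (phi2_neg hε ⟨x0_lt hε, le_rfl⟩).ne
  exact (mul_eq_zero.1 h).resolve_right h2

/-- The candidate derivative of `pfun`. -/
noncomputable def dfun (ε x : ℝ) : ℝ := pfun ε x * phi1 ε x / phi2 ε x

include hε hε2 in
lemma pfun_hasDerivWithinAt {x : ℝ} (hx : x ∈ Ioo (x0 ε) (1 - x0 ε)) :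
    HasDerivWithinAt (pfun ε) (dfun ε x) (Ioi x) x := by
  have hgε : gfun ε ε = g0 ε ε := gfun_eq hε ⟨(x0_lt hε).le, le_rfl⟩
  have hg0ε : 0 < g0 ε ε := g0_pos hε ⟨x0_lt hε, le_rfl⟩
  rcases lt_trichotomy x ε with h | h | h
  · -- x ∈ (x₀, ε)
    have hmem : x ∈ Ioc (x0 ε) ε := ⟨hx.1, h.le⟩
    have hder : HasDerivAt (fun y => g0 ε y / (6 * g0 ε ε)) (g0 ε x * Lfun ε x / (6 * g0 ε ε)) x :=
      (g0_hasDerivAt hε hmem).div_const _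
    have heq : pfun ε =ᶠ[𝓝 x] fun y => g0 ε y / (6 * g0 ε ε) := by
      filter_upwards [Ioo_mem_nhds hx.1 h] with y hy
      rw [pfun_left hy.2.le, gfun_eq hε ⟨hy.1.le, hy.2.le⟩, hgε]
    have : HasDerivAt (pfun ε) (g0 ε x * Lfun ε x / (6 * g0 ε ε)) x :=
      hder.congr_of_eventuallyEq heq
    have hval : g0 ε x * Lfun ε x / (6 * g0 ε ε) = dfun ε x := by
      rw [dfun, pfun_left h.le, gfun_eq hε ⟨hx.1.le, h.le⟩, hgε, ← L_phi hε hmem]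
      have h2 : phi2 ε x ≠ 0 := (phi2_neg hε hmem).ne
      field_simp
    rw [← hval]
    exact this.hasDerivWithinAt
  · -- x = ε
    have hval : dfun ε x = 0 := by rw [dfun, h, phi1_eps hε hε2]; simp
    rw [hval]
    refine HasDerivWithinAt.congr_of_eventuallyEq
      (hasDerivWithinAt_const x (Ioi x) (1/6 : ℝ)) ?_ (by rw [h, pfun_eps hε])
    have hmem : Iio (1-ε) ∈ 𝓝[Ioi x] x :=
      nhdsWithin_le_nhds (Iio_mem_nhds (by rw [h]; linarith))
    filter_upwards [hmem, self_mem_nhdsWithin] with y hy1 hy2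
    exact pfun_mid hε hε2 (h ▸ hy2) (le_of_lt hy1)
  · -- x > ε
    rcases lt_trichotomy x (1-ε) with h2 | h2 | h2
    · -- middle
      have hval : dfun ε x = 0 := by rw [dfun, phi1_mid hε hε2 h h2.le]; simp
      rw [hval]
      refine HasDerivWithinAt.congr_of_eventuallyEq
        (hasDerivWithinAt_const x (Ioi x) (1/6 : ℝ)) ?_ (pfun_mid hε hε2 h h2.le)
      have hmem : Ioo ε (1-ε) ∈ 𝓝[Ioi x] x := nhdsWithin_le_nhds (Ioo_mem_nhds h h2)
      filter_upwards [hmem] with y hy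
      exact pfun_mid hε hε2 hy.1 hy.2.le
    · -- x = 1 - ε
      have h1x : 1 - x = ε := by rw [h2]; ring
      have hinner : HasDerivAt (fun y : ℝ => 1 - y) (-1) x := by
        simpa using (hasDerivAt_id' x).const_sub (1:ℝ)
      have hmem' : (1:ℝ) - x ∈ Ioc (x0 ε) ε := by rw [h1x]; exact ⟨x0_lt hε, le_rfl⟩
      have houter := g0_hasDerivAt hε hmem'
      have hder : HasDerivAt (fun y => g0 ε (1-y) / (6 * g0 ε ε))
          ((g0 ε (1-x) * Lfun ε (1-x)) * (-1) / (6 * g0 ε ε)) x :=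
        (HasDerivAt.comp x houter hinner).div_const _
      have hval : (g0 ε (1-x) * Lfun ε (1-x)) * (-1) / (6 * g0 ε ε) = dfun ε x := by
        rw [h1x, Lfun_eps hε hε2, dfun, phi1_mid hε hε2 h h2.le]
        simp
      rw [← hval]
      refine HasDerivWithinAt.congr_of_eventuallyEq hder.hasDerivWithinAt ?_ ?_
      · have hmem : Iio (1 - x0 ε) ∈ 𝓝[Ioi x] x :=
          nhdsWithin_le_nhds (Iio_mem_nhds (by rw [h2]; linarith [x0_lt hε]))
        filter_upwards [hmem, self_mem_nhdsWithin] with y hy1 hy2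
        have hy2' : 1 - ε < y := by rw [← h2]; exact hy2
        rw [pfun_right hε hε2 hy2', gfun_eq hε ⟨by simp only [mem_Iio] at hy1; linarith,
          by linarith⟩, hgε]
      · rw [pfun_mid hε hε2 h h2.le, h1x]
        field_simp
    · -- x ∈ (1-ε, 1-x₀)
      have hx0 : x0 ε < 1 - x := by linarith [hx.2]
      have hxε : 1 - x < ε := by linarith
      have hinner : HasDerivAt (fun y : ℝ => 1 - y) (-1) x := by
        simpa using (hasDerivAt_id' x).const_sub (1:ℝ)
      have houter := g0_hasDerivAt hε (x := 1 - x) ⟨hx0, hxε.le⟩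
      have hder : HasDerivAt (fun y => g0 ε (1-y) / (6 * g0 ε ε))
          ((g0 ε (1-x) * Lfun ε (1-x)) * (-1) / (6 * g0 ε ε)) x :=
        (HasDerivAt.comp x houter hinner).div_const _
      have hval : (g0 ε (1-x) * Lfun ε (1-x)) * (-1) / (6 * g0 ε ε) = dfun ε x := by
        rw [dfun, pfun_right hε hε2 h2, phi1_right hε hε2 h2, phi2_right hε hε2 h2,
          ← L_phi hε ⟨hx0, hxε.le⟩, gfun_eq hε ⟨hx0.le, hxε.le⟩, hgε]
        have hφ : phi2 ε (1-x) ≠ 0 := (phi2_neg hε ⟨hx0, hxε.le⟩).ne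
        field_simp
      rw [← hval]
      refine HasDerivWithinAt.congr_of_eventuallyEq hder.hasDerivWithinAt ?_ ?_
      · have hmem : Ioo (1-ε) (1 - x0 ε) ∈ 𝓝[Ioi x] x :=
          nhdsWithin_le_nhds (Ioo_mem_nhds h2 hx.2)
        filter_upwards [hmem] with y hy
        rw [pfun_right hε hε2 hy.1, gfun_eq hε ⟨by linarith [hy.2], by linarith [hy.1]⟩, hgε]
      · rw [pfun_right hε hε2 h2, gfun_eq hε ⟨hx0.le, hxε.le⟩, hgε]

end eps3

section eps4
variable {ε : ℝ} (hε : 0 < ε) (hε2 : ε ≤ 1/100)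

include hε in
lemma g0_cont : ContinuousOn (g0 ε) (Icc (x0 ε) ε) := by
  have hx0 := x0_pos hε
  unfold g0
  apply ContinuousOn.mul
  apply ContinuousOn.mul
  apply ContinuousOn.mul
  · exact ((continuous_id.sub continuous_const).continuousOn).rpow_const
      (fun x _ => Or.inr (Apos hε).le)
  · exact ((continuous_const.sub continuous_id).continuousOn).rpow_const
      (fun x _ => Or.inr (Bpos hε).le)
  · exact ((continuous_id.add continuous_const).continuousOn).rpow_const
      (fun x hx => Or.inl (ne_of_gt (by simp only [Pi.add_apply, id_eq]; nlinarith [hx.1])))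
  · apply Real.continuous_exp.comp_continuousOn
    apply ContinuousOn.add
    · exact continuousOn_const.div
        ((continuous_const.add continuous_id).continuousOn.pow 2)
        (fun x hx => by nlinarith [hx.1])
    · exact continuousOn_const.div
        (continuous_const.add continuous_id).continuousOn
        (fun x hx => by nlinarith [hx.1])

include hε hε2 in
lemma pfun_cont : ContinuousOn (pfun ε) (Icc (x0 ε) (1 - x0 ε)) := by
  have hgε : gfun ε ε = g0 ε ε := gfun_eq hε ⟨(x0_lt hε).le, le_rfl⟩
  have hg0ε : 0 < g0 ε ε := g0_pos hε ⟨x0_lt hε, le_rfl⟩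
  have c1 : ContinuousOn (pfun ε) (Icc (x0 ε) ε) := by
    apply ((g0_cont hε).div_const (6 * g0 ε ε)).congr
    intro y hy
    rw [pfun_left hy.2, gfun_eq hε hy, hgε]
  have c2 : ContinuousOn (pfun ε) (Icc ε (1-ε)) := by
    apply (continuousOn_const (c := (1/6 : ℝ))).congr
    intro y hy
    rcases eq_or_lt_of_le hy.1 with h | h
    · rw [← h, pfun_eps hε]
    · rw [pfun_mid hε hε2 h hy.2]
  have c3 : ContinuousOn (pfun ε) (Icc (1-ε) (1 - x0 ε)) := by
    have hmap : MapsTo (fun y : ℝ => 1 - y) (Icc (1-ε) (1 - x0 ε)) (Icc (x0 ε) ε) :=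
      fun y hy => ⟨by change x0 ε ≤ 1 - y; linarith [hy.2], by change 1 - y ≤ ε; linarith [hy.1]⟩
    apply (((g0_cont hε).comp (continuous_const.sub continuous_id).continuousOn
      hmap).div_const (6 * g0 ε ε)).congr
    intro y hy
    rcases eq_or_lt_of_le hy.1 with h | h
    · rw [← h, pfun_mid hε hε2 (by linarith) le_rfl]
      simp only [Function.comp, id_eq, Pi.sub_apply]
      rw [show (1:ℝ) - (1 - ε) = ε by ring]
      field_simp
    · rw [pfun_right hε hε2 h, gfun_eq hε ⟨by linarith [hy.2], by linarith [hy.1]⟩, hgε]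
      rfl
  intro x hx
  have key : ∀ s : Set ℝ, IsClosed s → ContinuousOn (pfun ε) s →
      ContinuousWithinAt (pfun ε) s x := by
    intro s hs hc
    by_cases hxs : x ∈ s
    · exact hc x hxs
    · exact continuousWithinAt_of_notMem_closure (by rwa [hs.closure_eq])
  have hsub : Icc (x0 ε) (1 - x0 ε) ⊆ (Icc (x0 ε) ε ∪ Icc ε (1-ε)) ∪ Icc (1-ε) (1 - x0 ε) := by
    intro y hy
    rcases le_total y ε with h | h
    · exact Or.inl (Or.inl ⟨hy.1, h⟩)
    rcases le_total y (1-ε) with h2 | h2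
    · exact Or.inl (Or.inr ⟨h, h2⟩)
    · exact Or.inr ⟨h2, hy.2⟩
  exact (((key _ isClosed_Icc c1).union (key _ isClosed_Icc c2)).union
    (key _ isClosed_Icc c3)).mono hsub

end eps4

/-- Bounded factor of the weight near the left endpoint. -/
noncomputable def Gw (ε x : ℝ) : ℝ :=
  (-12*ε^2) * (((2 + Real.sqrt 3)*ε - x) ^ ((4 - 2*Real.sqrt 3) * ε) * (x + ε) ^ (-(8*ε)) *
    Real.exp (12*ε^3/(ε+x)^2 + 12*ε^2/(ε+x))) / (6 * g0 ε ε * (x - (2 + Real.sqrt 3)*ε))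

section eps5
variable {ε : ℝ} (hε : 0 < ε) (hε2 : ε ≤ 1/100)

include hε hε2 in
lemma Am1_neg : (4 + 2*Real.sqrt 3) * ε - 1 < 0 := by nlinarith [s_lt]

include hε hε2 in
lemma w_fact {x : ℝ} (hx : x ∈ Icc (x0 ε) ε) :
    wfun ε x = (x - x0 ε) ^ ((4 + 2*Real.sqrt 3) * ε - 1) * Gw ε x := by
  have hgε : gfun ε ε = g0 ε ε := gfun_eq hε ⟨(x0_lt hε).le, le_rfl⟩
  have hg0ε : 0 < g0 ε ε := g0_pos hε ⟨x0_lt hε, le_rfl⟩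
  rcases eq_or_lt_of_le hx.1 with h | h
  · rw [wfun, ← h, pfun_x0 hε, neg_zero, zero_div, sub_self,
      Real.zero_rpow (Am1_neg hε hε2).ne, zero_mul]
  · have h1 : 0 < x - x0 ε := by linarith
    have h2 : 0 < (2 + Real.sqrt 3)*ε - x := by nlinarith [s_gt, hx.2]
    rw [wfun, pfun_left hx.2, gfun_eq hε hx, hgε, phi2_fac hε hx.2, g0, Gw,
      Real.rpow_sub_one h1.ne', x0]
    have h2' : x - (2 + Real.sqrt 3)*ε ≠ 0 := by intro hc; rw [sub_eq_zero] at hc; nlinarith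
    have h1' : x - (2 - Real.sqrt 3) * ε ≠ 0 := by unfold x0 at h1; linarith
    field_simp

include hε hε2 in
lemma phi2_eps : phi2 ε ε = -(1/6) := by
  rw [phi2, if_pos le_rfl, div_self hε.ne']
  norm_num

include hε hε2 in
lemma w_mid {x : ℝ} (hx : x ∈ Icc ε (1-ε)) : wfun ε x = 1 := by
  rcases eq_or_lt_of_le hx.1 with h | h
  · rw [wfun, ← h, pfun_eps hε, phi2_eps hε hε2]; norm_num
  · rw [wfun, pfun_mid hε hε2 h hx.2, phi2_mid hε hε2 h hx.2]; norm_num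

include hε hε2 in
lemma w_right {x : ℝ} (hx1 : 1 - ε < x) (hx2 : x ≤ 1 - x0 ε) :
    wfun ε x = ((1 - x0 ε) - x) ^ ((4 + 2*Real.sqrt 3) * ε - 1) * Gw ε (1-x) := by
  have h1x : 1 - x ∈ Icc (x0 ε) ε := ⟨by linarith, by linarith⟩
  have : wfun ε x = wfun ε (1-x) := by
    rw [wfun, wfun, pfun_right hε hε2 hx1, phi2_right hε hε2 hx1, pfun_left h1x.2]
  rw [this, w_fact hε hε2 h1x, show (1:ℝ) - x - x0 ε = (1 - x0 ε) - x by ring]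

include hε hε2 in
lemma Gw_cont : ContinuousOn (Gw ε) (Icc (x0 ε) ε) := by
  have hg0ε : 0 < g0 ε ε := g0_pos hε ⟨x0_lt hε, le_rfl⟩
  have hx0 := x0_pos hε
  unfold Gw
  apply ContinuousOn.div
  · apply continuousOn_const.mul
    apply ContinuousOn.mul
    apply ContinuousOn.mul
    · exact ((continuous_const.sub continuous_id).continuousOn).rpow_const
        (fun x _ => Or.inr (Bpos hε).le)
    · exact ((continuous_id.add continuous_const).continuousOn).rpow_const
        (fun x hx => Or.inl (ne_of_gt (by simp only [Pi.add_apply, id_eq]; nlinarith [hx.1])))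
    · apply Real.continuous_exp.comp_continuousOn
      apply ContinuousOn.add
      · exact continuousOn_const.div
          ((continuous_const.add continuous_id).continuousOn.pow 2)
          (fun x hx => by nlinarith [hx.1])
      · exact continuousOn_const.div
          (continuous_const.add continuous_id).continuousOn
          (fun x hx => by nlinarith [hx.1])
  · exact continuousOn_const.mul (continuous_id.sub continuous_const).continuousOn
  · intro x hx
    have h2 : x - (2 + Real.sqrt 3)*ε < 0 := by nlinarith [s_gt, hx.2]
    exact mul_ne_zero (by positivity) h2.ne

include hε hε2 in
lemma wq_integrable {q : ℝ → ℝ} (hq : ContinuousOn q (Icc (x0 ε) (1 - x0 ε))) :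
    IntervalIntegrable (fun x => wfun ε x * q x) volume (x0 ε) (1 - x0 ε) := by
  have hx0 := x0_pos hε
  have hxε := x0_lt hε
  have hord : x0 ε ≤ ε ∧ (ε:ℝ) ≤ 1 - ε ∧ 1 - ε ≤ 1 - x0 ε := ⟨hxε.le, by linarith, by linarith⟩
  have hA : (-1:ℝ) < (4 + 2*Real.sqrt 3) * ε - 1 := by nlinarith [s_gt, Apos hε]
  have base : IntervalIntegrable (fun y : ℝ => y ^ ((4 + 2*Real.sqrt 3) * ε - 1)) volume
      0 (ε - x0 ε) := intervalIntegral.intervalIntegrable_rpow' hA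
  -- piece 1
  have b3 : IntervalIntegrable (fun x : ℝ => (x - x0 ε) ^ ((4 + 2*Real.sqrt 3) * ε - 1)) volume
      (x0 ε) ε := by
    have := base.comp_sub_right (x0 ε)
    rwa [zero_add, sub_add_cancel] at this
  have hsub1 : Icc (x0 ε) ε ⊆ Icc (x0 ε) (1 - x0 ε) := Icc_subset_Icc le_rfl (by linarith)
  have I1 : IntervalIntegrable (fun x => wfun ε x * q x) volume (x0 ε) ε := by
    apply (b3.mul_continuousOn (g := fun x => Gw ε x * q x) ?_).congr_ae
    · apply ae_restrict_of_forall_mem measurableSet_uIoc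
      intro x hx
      rw [uIoc_of_le hxε.le] at hx
      dsimp only
      rw [w_fact hε hε2 ⟨hx.1.le, hx.2⟩]
      ring
    · rw [uIcc_of_le hxε.le]
      exact (Gw_cont hε hε2).mul (hq.mono hsub1)
  have I2 : IntervalIntegrable (fun x => wfun ε x * q x) volume ε (1-ε) := by
    have hsub2 : Icc ε (1-ε) ⊆ Icc (x0 ε) (1 - x0 ε) := Icc_subset_Icc hxε.le (by linarith)
    apply IntervalIntegrable.congr_ae (f := q)
    · apply ContinuousOn.intervalIntegrable
      rw [uIcc_of_le hord.2.1]
      exact hq.mono hsub2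
    · apply ae_restrict_of_forall_mem measurableSet_uIoc
      intro x hx
      rw [uIoc_of_le hord.2.1] at hx
      dsimp only
      rw [w_mid hε hε2 ⟨hx.1.le, hx.2⟩, one_mul]
  have I3 : IntervalIntegrable (fun x => wfun ε x * q x) volume (1-ε) (1 - x0 ε) := by
    have b5 : IntervalIntegrable (fun x : ℝ => ((1 - x0 ε) - x) ^ ((4 + 2*Real.sqrt 3) * ε - 1))
        volume (1-ε) (1 - x0 ε) := by
      have := (base.comp_sub_left (1 - x0 ε)).symm
      rwa [sub_zero, show 1 - x0 ε - (ε - x0 ε) = 1 - ε by ring] at this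
    apply (b5.mul_continuousOn (g := fun x => Gw ε (1-x) * q x) ?_).congr_ae
    · apply ae_restrict_of_forall_mem measurableSet_uIoc
      intro x hx
      rw [uIoc_of_le hord.2.2] at hx
      dsimp only
      rw [w_right hε hε2 hx.1 hx.2]
      ring
    · rw [uIcc_of_le hord.2.2]
      apply ContinuousOn.mul
      · apply (Gw_cont hε hε2).comp (continuous_const.sub continuous_id).continuousOn
        intro y hy
        exact ⟨by change x0 ε ≤ 1 - y; linarith [hy.2], by change 1 - y ≤ ε; linarith [hy.1]⟩
      · exact hq.mono (Icc_subset_Icc (by linarith) le_rfl)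
  exact (I1.trans I2).trans I3

end eps5

theorem stmt9 :
    ∃ ε₀ > (0:ℝ), ∀ ε : ℝ, 0 < ε → ε ≤ ε₀ →
      ∀ (lam₁ lam₂ : ℝ) (u₁ u₁' u₁'' u₂ u₂' u₂'' : ℝ → ℝ),
        lam₁ ≠ lam₂ →
        (∀ x ∈ Icc (0:ℝ) 1, HasDerivAt u₁ (u₁' x) x) →
        (∀ x ∈ Icc (0:ℝ) 1, HasDerivAt u₁' (u₁'' x) x) →
        ContinuousOn u₁'' (Icc 0 1) →
        (∀ x ∈ Icc (0:ℝ) 1, phi2 ε x * u₁'' x + phi1 ε x * u₁' x = lam₁ * u₁ x) →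
        (∀ x ∈ Icc (0:ℝ) 1, HasDerivAt u₂ (u₂' x) x) →
        (∀ x ∈ Icc (0:ℝ) 1, HasDerivAt u₂' (u₂'' x) x) →
        ContinuousOn u₂'' (Icc 0 1) →
        (∀ x ∈ Icc (0:ℝ) 1, phi2 ε x * u₂'' x + phi1 ε x * u₂' x = lam₂ * u₂ x) →
        (∫ x in (x0 ε)..(1 - x0 ε), wfun ε x * u₁ x * u₂ x) = 0 := by
  refine ⟨1/100, by norm_num, ?_⟩
  intro ε hε hε2 lam₁ lam₂ u₁ u₁' u₁'' u₂ u₂' u₂'' hne hu₁ hu₁' hc₁ hode₁ hu₂ hu₂' hc₂ hode₂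
  have hx0 := x0_pos hε
  have hxε := x0_lt hε
  have hab : x0 ε ≤ 1 - x0 ε := by linarith
  have hsub : Icc (x0 ε) (1 - x0 ε) ⊆ Icc (0:ℝ) 1 :=
    Icc_subset_Icc (by linarith) (by linarith)
  set V : ℝ → ℝ := fun x => u₁ x * u₂' x - u₁' x * u₂ x with hV
  set H : ℝ → ℝ := fun x => pfun ε x * V x with hH
  set F : ℝ → ℝ := fun x => (lam₁ - lam₂) * (wfun ε x * (u₁ x * u₂ x)) with hF
  have hderiv : ∀ x ∈ Ioo (x0 ε) (1 - x0 ε), HasDerivWithinAt H (F x) (Ioi x) x := by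
    intro x hx
    have hx01 : x ∈ Icc (0:ℝ) 1 := hsub ⟨hx.1.le, hx.2.le⟩
    have hVd : HasDerivAt V ((u₁' x * u₂' x + u₁ x * u₂'' x) - (u₁'' x * u₂ x + u₁' x * u₂' x)) x :=
      ((hu₁ x hx01).mul (hu₂' x hx01)).sub ((hu₁' x hx01).mul (hu₂ x hx01))
    have hPd := pfun_hasDerivWithinAt hε hε2 hx
    have htot : HasDerivWithinAt H _ (Ioi x) x := hPd.mul hVd.hasDerivWithinAt
    convert htot using 1
    have hφ := phi2_ne hε hε2 hx
    have e1 := hode₁ x hx01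
    have e2 := hode₂ x hx01
    rw [hF, hV]
    unfold dfun wfun
    field_simp
    linear_combination (pfun ε x * u₂ x) * e1 - (pfun ε x * u₁ x) * e2
  have hcu : ∀ (v v' : ℝ → ℝ), (∀ x ∈ Icc (0:ℝ) 1, HasDerivAt v (v' x) x) →
      ContinuousOn v (Icc (x0 ε) (1 - x0 ε)) := by
    intro v v' hv x hx
    exact (hv x (hsub hx)).continuousAt.continuousWithinAt
  have hcont : ContinuousOn H (Icc (x0 ε) (1 - x0 ε)) := by
    apply (pfun_cont hε hε2).mul
    exact ((hcu u₁ u₁' hu₁).mul (hcu u₂' u₂'' hu₂')).sub ((hcu u₁' u₁'' hu₁').mul (hcu u₂ u₂' hu₂))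
  have hqc : ContinuousOn (fun x => u₁ x * u₂ x) (Icc (x0 ε) (1 - x0 ε)) :=
    (hcu u₁ u₁' hu₁).mul (hcu u₂ u₂' hu₂)
  have hFint : IntervalIntegrable F volume (x0 ε) (1 - x0 ε) :=
    (wq_integrable hε hε2 hqc).const_mul _
  have hFTC := intervalIntegral.integral_eq_sub_of_hasDeriv_right_of_le hab hcont hderiv hFint
  rw [hH] at hFTC
  simp only [pfun_x0 hε, pfun_1mx0 hε hε2, zero_mul, sub_zero] at hFTC
  rw [hF] at hFTC
  rw [intervalIntegral.integral_const_mul] at hFTC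
  have h0 : (∫ x in (x0 ε)..(1 - x0 ε), wfun ε x * (u₁ x * u₂ x)) = 0 := by
    rcases mul_eq_zero.1 hFTC with h | h
    · exact absurd (sub_eq_zero.1 h) hne
    · exact h
  rw [← h0]
  congr 1
  ext x
  ring
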